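/- If the run-length sequences T = T_1^{α_1}...T_m^{α_m} and S = S_1^{β_1}...S_n^{β_n} (with T_i ≠ T_{i+1}, S_j ≠ S_{j+1}, all run lengths positive, equal total length) agree in at least one position within every block of T, then T_1, T_2, ..., T_m is a subsequence of S_1, S_2, ..., S_n; in particular n ≥ m. -/

import Mathlib

/-- Existence of the block containing position `k`. -/
lemma exists_block (β : ℕ → ℕ) : ∀ (n k : ℕ), k < ∑ j ∈ Finset.range n, β j →
    ∃ j < n, (∑ i ∈ Finset.range j, β i) ≤ k ∧ k < ∑ i ∈ Finset.range (j + 1), β i := by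
  intro n
  induction n with
  | zero => simp
  | succ n ih =>
    intro k hk
    by_cases h : k < ∑ j ∈ Finset.range n, β j
    · obtain ⟨j, hj, h1, h2⟩ := ih k h
      exact ⟨j, Nat.lt_succ_of_lt hj, h1, h2⟩
    · exact ⟨n, Nat.lt_succ_self n, Nat.le_of_not_lt h, hk⟩

/-- Value of the flattened run-length list at a position inside block `j`. -/
lemma flat_getElem {Ω : Type*} : ∀ (n : ℕ) (β : ℕ → ℕ) (S : ℕ → Ω) (j k : ℕ),
    j < n → (∑ i ∈ Finset.range j, β i) ≤ k → k < ∑ i ∈ Finset.range (j + 1), β i →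
    ((List.ofFn fun j' : Fin n => List.replicate (β j') (S j')).flatten)[k]? = some (S j) := by
  intro n
  induction n with
  | zero => intro β S j k hj; exact absurd hj (Nat.not_lt_zero j)
  | succ n ih =>
    intro β S j k hj h1 h2
    rw [List.ofFn_succ, List.flatten_cons, List.getElem?_append]
    simp only [List.length_replicate, Fin.val_zero]
    by_cases hk : k < β 0
    · rw [if_pos hk]
      have hj0 : j = 0 := by
        by_contra h
        obtain ⟨j', rfl⟩ := Nat.exists_eq_succ_of_ne_zero h
        simp only [Nat.succ_eq_add_one] at h1 h2 hj ⊢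
        have : β 0 ≤ ∑ i ∈ Finset.range (j' + 1), β i := by
          apply Finset.single_le_sum (f := β) (fun i _ => Nat.zero_le _)
          simp
        omega
      subst hj0
      rw [List.getElem?_replicate, if_pos hk]
    · rw [if_neg hk]
      have hj0 : j ≠ 0 := by
        rintro rfl
        rw [Finset.sum_range_succ, Finset.sum_range_zero] at h2
        omega
      obtain ⟨j', rfl⟩ := Nat.exists_eq_succ_of_ne_zero hj0
      simp only [Nat.succ_eq_add_one] at h1 h2 hj ⊢
      have e1 : ∑ i ∈ Finset.range (j' + 1), β i
          = (∑ i ∈ Finset.range j', β (i + 1)) + β 0 := Finset.sum_range_succ' β j'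
      have e2 : ∑ i ∈ Finset.range (j' + 1 + 1), β i
          = (∑ i ∈ Finset.range (j' + 1), β (i + 1)) + β 0 := Finset.sum_range_succ' β (j' + 1)
      have := ih (fun x => β (x + 1)) (fun x => S (x + 1)) j' (k - β 0)
        (Nat.lt_of_succ_lt_succ hj)
        (by show (∑ i ∈ Finset.range j', β (i + 1)) ≤ k - β 0; omega)
        (by show k - β 0 < ∑ i ∈ Finset.range (j' + 1), β (i + 1); omega)
      simpa [Fin.val_succ] using this

/-- A strictly increasing list of naturals below `n` is a sublist of `range n`. -/
lemma pairwise_lt_sublist_range : ∀ (L : List ℕ) (n : ℕ), L.Pairwise (· < ·) →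
    (∀ x ∈ L, x < n) → L.Sublist (List.range n) := by
  intro L
  induction L using List.reverseRecOn with
  | nil => intro n _ _; exact List.nil_sublist _
  | append_singleton L a ih =>
    intro n hp hb
    have ha : a < n := hb a (by simp)
    have hpa : ∀ x ∈ L, x < a := by
      intro x hx
      exact (List.pairwise_append.mp hp).2.2 x hx a (by simp)
    have h1 : L.Sublist (List.range a) :=
      ih a (List.Pairwise.sublist (List.sublist_append_left L [a]) hp) hpa
    have h2 : (L ++ [a]).Sublist (List.range (a + 1)) := by
      rw [List.range_succ]
      exact List.Sublist.append h1 (List.Sublist.refl _)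
    exact h2.trans (List.range_sublist.mpr ha)

/-- If the run-length sequences `t = T₁^{α₁}…T_m^{α_m}` and `s = S₁^{β₁}…S_n^{β_n}`
(adjacent run values distinct, all run lengths positive, equal total length `l`)
agree at at least one position inside every block of `t`, then `T₁, …, T_m` is a
subsequence of `S₁, …, S_n`; in particular `m ≤ n`. -/
theorem stmt_8 {Ω : Type*} [Fintype Ω] [DecidableEq Ω]
    (l m n : ℕ)
    (α β : ℕ → ℕ) (T S : ℕ → Ω)
    (hα : ∀ i < m, 0 < α i) (hβ : ∀ j < n, 0 < β j)
    (hαsum : ∑ i ∈ Finset.range m, α i = l)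
    (hβsum : ∑ j ∈ Finset.range n, β j = l)
    (hT : ∀ i, i + 1 < m → T i ≠ T (i + 1))
    (hS : ∀ j, j + 1 < n → S j ≠ S (j + 1))
    (hagree : ∀ i < m, ∃ k, (∑ j ∈ Finset.range i, α j) ≤ k ∧
        k < (∑ j ∈ Finset.range (i + 1), α j) ∧
        ((List.ofFn fun i' : Fin m => List.replicate (α i') (T i')).flatten)[k]? =
        ((List.ofFn fun j' : Fin n => List.replicate (β j') (S j')).flatten)[k]?) :
    ((List.range m).map T).Sublist ((List.range n).map S) ∧ m ≤ n := by
  -- choose agreement positions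
  have hdata : ∀ i < m, ∃ k j, (∑ j' ∈ Finset.range i, α j') ≤ k ∧
      k < (∑ j' ∈ Finset.range (i + 1), α j') ∧ j < n ∧
      (∑ i' ∈ Finset.range j, β i') ≤ k ∧ k < (∑ i' ∈ Finset.range (j + 1), β i') ∧
      T i = S j := by
    intro i hi
    obtain ⟨k, hk1, hk2, hk3⟩ := hagree i hi
    have hkl : k < ∑ j ∈ Finset.range n, β j := by
      rw [hβsum, ← hαsum]
      calc k < ∑ j' ∈ Finset.range (i + 1), α j' := hk2
        _ ≤ ∑ i ∈ Finset.range m, α i :=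
          Finset.sum_le_sum_of_subset (Finset.range_subset_range.mpr hi)
    obtain ⟨j, hj, hj1, hj2⟩ := exists_block β n k hkl
    have eT := flat_getElem m α T i k hi hk1 hk2
    have eS := flat_getElem n β S j k hj hj1 hj2
    rw [eT, eS] at hk3
    exact ⟨k, j, hk1, hk2, hj, hj1, hj2, Option.some_injective _ hk3⟩
  classical
  choose! K J hK1 hK2 hJn hJ1 hJ2 hTS using hdata
  -- consecutive strict monotonicity of J
  have hstep : ∀ i, i + 1 < m → J i < J (i + 1) := by
    intro i hi
    have him : i < m := Nat.lt_of_succ_lt hi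
    have hle : J i ≤ J (i + 1) := by
      by_contra h
      push_neg at h
      have h1 : ∑ i' ∈ Finset.range (J (i + 1) + 1), β i' ≤ ∑ i' ∈ Finset.range (J i), β i' :=
        Finset.sum_le_sum_of_subset (Finset.range_subset_range.mpr h)
      have := hJ2 i him
      have := hJ1 i him
      have := hJ1 (i + 1) hi
      have := hK2 i him
      have := hK1 (i + 1) hi
      have := hJ2 (i + 1) hi
      omega
    rcases Nat.lt_or_ge (J i) (J (i + 1)) with h | h
    · exact h
    · have heq : J i = J (i + 1) := le_antisymm hle h
      exfalso
      apply hT i hi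
      rw [hTS i him, hTS (i + 1) hi, heq]
  -- full strict monotonicity
  have hmono : ∀ b a, a < b → b < m → J a < J b := by
    intro b
    induction b with
    | zero => omega
    | succ b ih =>
      intro a hab hbm
      rcases Nat.lt_or_ge a b with h | h
      · exact (ih a h (Nat.lt_of_succ_lt hbm)).trans (hstep b hbm)
      · have : a = b := by omega
        subst this
        exact hstep a hbm
  -- the sublist
  have hsub : ((List.range m).map J).Sublist (List.range n) := by
    apply pairwise_lt_sublist_range
    · rw [List.pairwise_map]
      refine (List.pairwise_lt_range).imp_of_mem ?_
      intro a b ha hb hab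
      exact hmono b a hab (List.mem_range.mp hb)
    · intro x hx
      simp only [List.mem_map, List.mem_range] at hx
      obtain ⟨i, hi, rfl⟩ := hx
      exact hJn i hi
  have hmain : ((List.range m).map T).Sublist ((List.range n).map S) := by
    have : (List.range m).map T = ((List.range m).map J).map S := by
      rw [List.map_map]
      apply List.map_congr_left
      intro i hi
      exact hTS i (List.mem_range.mp hi)
    rw [this]
    exact hsub.map S
  refine ⟨hmain, ?_⟩
  have := hmain.length_le
  simpa using this
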